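/- arXiv:2006.05607 — 2 statements merged into one kernel-verified Lean document; each statement's English description precedes it below -/
import Mathlib

section
/- Let Q = T[H_1, ..., H_t] be a strongly connected semicomplete composition. Then every 3-king of Q is adjacent to every non-king of Q (i.e., there is at least one arc between them). -/
/-- There is a directed walk (equivalently, path) of length at most `k` from `x` to `y`. -/
def KReach {V : Type*} (A : V → V → Prop) (k : ℕ) (x y : V) : Prop :=
  ∃ n : ℕ, n ≤ k ∧ ∃ f : ℕ → V, f 0 = x ∧ f n = y ∧ ∀ i < n, A (f i) (f (i + 1))

/-- `x` is a `k`-king: it reaches every vertex by a path of length at most `k`. -/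
def IsKKing {V : Type*} (A : V → V → Prop) (k : ℕ) (x : V) : Prop :=
  ∀ y : V, KReach A k x y

/-- A strict `k`-king: a `k`-king with some vertex at distance exactly `k`. -/
def IsStrictKKing {V : Type*} (A : V → V → Prop) (k : ℕ) (x : V) : Prop :=
  IsKKing A k x ∧ ∃ y : V, ¬ KReach A (k - 1) x y

/-- Strong connectivity of a digraph. -/
def Strong {V : Type*} (A : V → V → Prop) : Prop :=
  ∀ x y : V, ∃ k : ℕ, KReach A k x y

/-- Semicomplete digraph: at least one arc between any two distinct vertices. -/
def Semicomplete {V : Type*} (A : V → V → Prop) : Prop :=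
  ∀ x y : V, x ≠ y → A x y ∨ A y x

/-- Tournament: exactly one arc between any two distinct vertices, no loops. -/
def IsTournament {V : Type*} (A : V → V → Prop) : Prop :=
  Irreflexive A ∧ ∀ x y : V, x ≠ y → (A x y ↔ ¬ A y x)

/-- Out-degree of a vertex. -/
noncomputable def outDeg {V : Type*} (A : V → V → Prop) (x : V) : ℕ :=
  Set.ncard {y | A x y}

/-- There is a directed cycle of length exactly `k` through `x`. -/
def CycleThrough {V : Type*} (A : V → V → Prop) (k : ℕ) (x : V) : Prop :=
  ∃ f : ℕ → V, f 0 = x ∧ f k = x ∧ (∀ i < k, A (f i) (f (i + 1))) ∧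
    ∀ i j, i < k → j < k → f i = f j → i = j

/-- `x` belongs to a directed cycle of length at most `k`. -/
def OnShortCycle {V : Type*} (A : V → V → Prop) (k : ℕ) (x : V) : Prop :=
  ∃ n : ℕ, 2 ≤ n ∧ n ≤ k ∧ CycleThrough A n x

/-- `AQ` (on `W`) is the composition `T[H_1, …, H_t]` of digraphs over the digraph `AT`
(on index type `ι`), where the fiber of `π` over `i` is the vertex set of `H_i`
(each fiber is nonempty since `π` is surjective), the arcs of `H_i` are the arcs of
`AQ` inside the fiber over `i`, and arcs between different fibers are determined by `AT`. -/
structure IsComposition {ι W : Type*} (AT : ι → ι → Prop) (AQ : W → W → Prop)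
    (π : W → ι) : Prop where
  surj : Function.Surjective π
  cross : ∀ x y : W, π x ≠ π y → (AQ x y ↔ AT (π x) (π y))

/-- The digraph `H_i`: the induced subdigraph on the fiber of `π` over `i`. -/
def FiberArc {ι W : Type*} (AQ : W → W → Prop) (π : W → ι) (i : ι) :
    {w : W // π w = i} → {w : W // π w = i} → Prop :=
  fun a b => AQ a.1 b.1

/-- The induced subdigraph on the vertices satisfying `P`. -/
def DelArc {V : Type*} (A : V → V → Prop) (P : V → Prop) :
    {v : V // P v} → {v : V // P v} → Prop :=
  fun a b => A a.1 b.1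

/-- `{v}` is a `k`-absorbent set: every other vertex reaches `v` in at most `k` steps. -/
def SingletonAbsorbent {V : Type*} (A : V → V → Prop) (k : ℕ) (v : V) : Prop :=
  ∀ x : V, x ≠ v → KReach A k x v

/-- A quasi-kernel: an independent set `K` such that every vertex outside `K`
reaches some vertex of `K` by a path of length at most 2. -/
def QuasiKernel {V : Type*} (A : V → V → Prop) (K : Set V) : Prop :=
  (∀ x ∈ K, ∀ y ∈ K, x ≠ y → ¬ A x y) ∧ ∀ x ∉ K, ∃ y ∈ K, KReach A 2 x y

/-- A `k`-kernel: a `k`-independent and `(k-1)`-absorbent set. -/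
def KKernel {V : Type*} (A : V → V → Prop) (k : ℕ) (K : Set V) : Prop :=
  (∀ x ∈ K, ∀ y ∈ K, x ≠ y → ¬ KReach A (k - 1) x y) ∧
    ∀ x ∉ K, ∃ y ∈ K, KReach A (k - 1) x y

lemma switch_point {P : ℕ → Prop} : ∀ n, P 0 → ¬ P n → ∃ m < n, P m ∧ ¬ P (m + 1) := by
  intro n h0 hn
  induction n with
  | zero => exact absurd h0 hn
  | succ n ih =>
    by_cases h : P n
    · exact ⟨n, Nat.lt_succ_self n, h, hn⟩
    · obtain ⟨m, hm, h1, h2⟩ := ih h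
      exact ⟨m, hm.trans (Nat.lt_succ_self n), h1, h2⟩

lemma kreach2 {V : Type*} {A : V → V → Prop} {x a y : V} (h1 : A x a) (h2 : A a y) :
    KReach A 3 x y := by
  refine ⟨2, by norm_num, fun k => if k = 0 then x else if k = 1 then a else y,
    by simp, by simp, ?_⟩
  intro i hi
  interval_cases i <;> simpa

lemma kreach3 {V : Type*} {A : V → V → Prop} {x a b y : V}
    (h1 : A x a) (h2 : A a b) (h3 : A b y) : KReach A 3 x y := by
  refine ⟨3, le_refl 3,
    fun k => if k = 0 then x else if k = 1 then a else if k = 2 then b else y,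
    by simp, by simp, ?_⟩
  intro i hi
  interval_cases i <;> simpa

lemma fiber_king {ι W : Type*} [Fintype ι]
    {AT : ι → ι → Prop} {AQ : W → W → Prop} {π : W → ι}
    (hcard : 2 ≤ Fintype.card ι)
    (hsemi : Semicomplete AT) (hcomp : IsComposition AT AQ π)
    (hstrong : Strong AQ) {v u : W} (hfib : π u = π v)
    (hv : IsKKing AQ 3 v) : IsKKing AQ 3 u := by
  classical
  -- find a vertex `a` in another fiber with an arc (in T) into the fiber of v
  obtain ⟨j, hj⟩ := Fintype.exists_ne_of_one_lt_card hcard (π v)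
  obtain ⟨z, hz⟩ := hcomp.surj j
  obtain ⟨k0, n0, hn0, f0, hf00, hf0n, harc0⟩ := hstrong z v
  obtain ⟨m0, hm0, hPa, hPa'⟩ := switch_point (P := fun m => π (f0 m) ≠ π v) n0
    (by show π (f0 0) ≠ π v; rw [hf00, hz]; exact hj)
    (by show ¬π (f0 n0) ≠ π v; rw [hf0n]; simp)
  push_neg at hPa'
  set a := f0 m0 with ha_def
  have haN : π (f0 (m0 + 1)) = π v := hPa'
  have hAQa : AQ a (f0 (m0 + 1)) := harc0 m0 hm0
  have hATa : AT (π a) (π v) := by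
    have := (hcomp.cross a (f0 (m0 + 1)) (by rw [haN]; exact hPa)).mp hAQa
    rwa [haN] at this
  have haNe : π a ≠ π v := hPa
  intro y
  by_cases hy : π y = π v
  · -- target in the same fiber as v (and u)
    obtain ⟨n, hn, g, hg0, hgn, harc⟩ := hv a
    have hn1 : 1 ≤ n := by
      rcases Nat.eq_zero_or_pos n with h0 | h0
      · exfalso; apply haNe; rw [← hgn, h0, hg0]
      · exact h0
    have hay : AQ a y := (hcomp.cross a y (by rw [hy]; exact haNe)).mpr (by rw [hy]; exact hATa)
    by_cases h1 : AT (π v) (π a)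
    · have hua : AQ u a := (hcomp.cross u a (by rw [hfib]; exact haNe.symm)).mpr
        (by rw [hfib]; exact h1)
      exact kreach2 hua hay
    · set b := g (n - 1) with hb_def
      have hba : AQ b a := by
        have := harc (n - 1) (by omega)
        rwa [show n - 1 + 1 = n by omega, hgn] at this
      have hbne : π b ≠ π v := by
        intro h
        apply h1
        have := (hcomp.cross b a (by rw [h]; exact haNe.symm)).mp hba
        rwa [h] at this
      have hn2 : 2 ≤ n := by
        rcases Nat.lt_or_ge n 2 with h | h
        · exfalso; apply hbne
          have : n = 1 := by omega
          rw [hb_def, this]; simpa using congrArg π hg0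
        · exact h
      by_cases h2 : AT (π v) (π b)
      · have hub : AQ u b := (hcomp.cross u b (by rw [hfib]; exact fun h => hbne h.symm)).mpr
          (by rw [hfib]; exact h2)
        exact kreach3 hub hba hay
      · have hbv : AT (π b) (π v) := (hsemi _ _ (fun h => hbne h.symm)).resolve_left h2
        have hby : AQ b y := (hcomp.cross b y (by rw [hy]; exact hbne)).mpr (by rw [hy]; exact hbv)
        set c := g (n - 2) with hc_def
        have hcb : AQ c b := by
          have := harc (n - 2) (by omega)
          rwa [show n - 2 + 1 = n - 1 by omega] at this
        have hcne : π c ≠ π v := by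
          intro h
          apply h2
          have := (hcomp.cross c b (by rw [h]; exact fun h' => hbne h'.symm)).mp hcb
          rwa [h] at this
        have hn3 : n = 3 := by
          rcases Nat.lt_or_ge n 3 with h | h
          · exfalso; apply hcne
            have : n = 2 := by omega
            rw [hc_def, this]; simpa using congrArg π hg0
          · omega
        have hvc : AQ v c := by
          have h := harc 0 (by omega)
          rw [hg0] at h
          have hc1 : c = g 1 := by rw [hc_def, hn3]
          rw [hc1]
          exact h
        have hvcT : AT (π v) (π c) := (hcomp.cross v c (fun h => hcne h.symm)).mp hvc
        have huc : AQ u c := (hcomp.cross u c (by rw [hfib]; exact fun h => hcne h.symm)).mpr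
          (by rw [hfib]; exact hvcT)
        exact kreach3 huc hcb hby
  · -- target in another fiber: shortcut v's path at the first exit from the fiber
    obtain ⟨n, hn, g, hg0, hgn, harc⟩ := hv y
    have hn1 : 1 ≤ n := by
      rcases Nat.eq_zero_or_pos n with h0 | h0
      · exfalso; apply hy; rw [← hgn, h0, hg0]
      · exact h0
    obtain ⟨m, hm, hPm, hPm'⟩ := switch_point (P := fun m => π (g m) = π v) n
      (by show π (g 0) = π v; rw [hg0]) (by show ¬π (g n) = π v; rw [hgn]; exact hy)
    have harcm : AQ (g m) (g (m + 1)) := harc m hm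
    have hTm : AT (π v) (π (g (m + 1))) := by
      have := (hcomp.cross (g m) (g (m + 1)) (by rw [hPm]; exact fun h => hPm' h.symm)).mp harcm
      rwa [hPm] at this
    have hu1 : AQ u (g (m + 1)) := (hcomp.cross u (g (m + 1))
      (by rw [hfib]; exact fun h => hPm' h.symm)).mpr (by rw [hfib]; exact hTm)
    refine ⟨n - m, by omega, fun k => if k = 0 then u else g (m + k), by simp, ?_, ?_⟩
    · show (if n - m = 0 then u else g (m + (n - m))) = y
      rw [if_neg (by omega), show m + (n - m) = n by omega, hgn]
    · intro i hi
      show AQ (if i = 0 then u else g (m + i)) (if i + 1 = 0 then u else g (m + (i + 1)))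
      rw [if_neg (Nat.succ_ne_zero i)]
      by_cases hi0 : i = 0
      · subst hi0
        rw [if_pos rfl]
        simpa using hu1
      · rw [if_neg hi0, show m + (i + 1) = m + i + 1 by omega]
        exact harc (m + i) (by omega)

/-- In a strong semicomplete composition there is an arc between every 3-king
and every non-king. -/
theorem stmt10 {ι W : Type*} [Fintype ι] [Fintype W]
    (AT : ι → ι → Prop) (AQ : W → W → Prop) (π : W → ι)
    (hcard : 2 ≤ Fintype.card ι)
    (hTirr : Irreflexive AT) (hQirr : Irreflexive AQ)
    (hsemi : Semicomplete AT) (hcomp : IsComposition AT AQ π)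
    (hstrong : Strong AQ) :
    ∀ v u : W, IsKKing AQ 3 v → ¬ IsKKing AQ 3 u → (AQ v u ∨ AQ u v) := by
  intro v u hv hu
  by_cases hπ : π u = π v
  · exact absurd (fiber_king hcard hsemi hcomp hstrong hπ hv) hu
  · rcases hsemi (π v) (π u) (fun h => hπ h.symm) with h | h
    · exact Or.inl ((hcomp.cross v u (fun h' => hπ h'.symm)).mpr h)
    · exact Or.inr ((hcomp.cross u v hπ).mpr h)
end

section
/- Let Q = T[H_1, ..., H_t] be a strongly connected semicomplete composition. For every non-king u of Q, there exists a 3-king v of Q such that d_Q(u, v) > 3 and v dominates u (i.e., vu is an arc). -/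
section KReachLemmas

variable {V : Type*} {A : V → V → Prop}

lemma kreach_refl (k : ℕ) (x : V) : KReach A k x x :=
  ⟨0, Nat.zero_le _, fun _ => x, rfl, rfl, fun i h => absurd h (Nat.not_lt_zero i)⟩

lemma kreach_mono {k k' : ℕ} (h : k ≤ k') {x y : V} (hr : KReach A k x y) :
    KReach A k' x y := by
  obtain ⟨n, hn, f, h0, hn', harc⟩ := hr
  exact ⟨n, hn.trans h, f, h0, hn', harc⟩

lemma kreach_arc {k : ℕ} (hk : 1 ≤ k) {x y : V} (h : A x y) : KReach A k x y := by
  refine ⟨1, hk, fun i => if i = 0 then x else y, by simp, by simp, ?_⟩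
  intro i hi
  have : i = 0 := by omega
  subst this
  simpa using h

lemma kreach_snoc {k : ℕ} {x y z : V} (hr : KReach A k x y) (h : A y z) :
    KReach A (k + 1) x z := by
  obtain ⟨n, hn, f, h0, hn', harc⟩ := hr
  refine ⟨n + 1, by omega, fun i => if i ≤ n then f i else z, by simp [h0], by simp, ?_⟩
  intro i hi
  rcases Nat.lt_or_ge i n with h' | h'
  · simp only [if_pos (Nat.le_of_lt h'), if_pos (Nat.succ_le_of_lt h')]
    exact harc i h'
  · have hin : i = n := by omega
    show A (if i ≤ n then f i else z) (if i + 1 ≤ n then f (i + 1) else z)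
    rw [if_pos (by omega : i ≤ n), if_neg (by omega : ¬ i + 1 ≤ n), hin, hn']
    exact h

lemma kreach_cons {k : ℕ} {x y z : V} (h : A x y) (hr : KReach A k y z) :
    KReach A (k + 1) x z := by
  obtain ⟨n, hn, f, h0, hn', harc⟩ := hr
  refine ⟨n + 1, by omega, fun i => if i = 0 then x else f (i - 1), by simp, by simp [hn'], ?_⟩
  intro i hi
  cases i with
  | zero => simpa [h0] using h
  | succ m => simpa using harc m (by omega)

lemma kreach_succ {k : ℕ} {x y : V} (hr : KReach A (k + 1) x y) :
    KReach A k x y ∨ ∃ z, KReach A k x z ∧ A z y := by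
  obtain ⟨n, hn, f, h0, hn', harc⟩ := hr
  rcases Nat.lt_or_ge n (k + 1) with h' | h'
  · exact Or.inl ⟨n, by omega, f, h0, hn', harc⟩
  · have hnk : n = k + 1 := by omega
    subst hnk
    refine Or.inr ⟨f k, ⟨k, le_refl _, f, h0, rfl, fun i hi => harc i (by omega)⟩, ?_⟩
    rw [← hn']
    exact harc k (by omega)

end KReachLemmas

section Composition

variable {ι W : Type*} {AT : ι → ι → Prop} {AQ : W → W → Prop} {π : W → ι}

lemma walk_project (hcomp : IsComposition AT AQ π) :
    ∀ (n : ℕ) (x y : W) (f : ℕ → W), f 0 = x → f n = y →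
      (∀ i < n, AQ (f i) (f (i + 1))) →
      ∃ m ≤ n, ∃ g : ℕ → ι, g 0 = π x ∧ g m = π y ∧ ∀ i < m, AT (g i) (g (i + 1)) := by
  intro n
  induction n with
  | zero =>
    intro x y f h0 hn _
    refine ⟨0, le_refl _, fun _ => π x, rfl, ?_, fun i hi => absurd hi (Nat.not_lt_zero i)⟩
    rw [← h0, hn]
  | succ n ih =>
    intro x y f h0 hn harc
    obtain ⟨m, hm, g, hg0, hgm, hgarc⟩ := ih (f 1) y (fun i => f (i + 1)) rfl hn
      (fun i hi => harc (i + 1) (by omega))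
    by_cases hxy : π x = π (f 1)
    · exact ⟨m, by omega, g, by rw [hg0, hxy], hgm, hgarc⟩
    · have hat : AT (π x) (π (f 1)) := by
        rw [← hcomp.cross x (f 1) hxy]
        have := harc 0 (by omega)
        rwa [h0] at this
      refine ⟨m + 1, by omega, fun i => if i = 0 then π x else g (i - 1), by simp,
        by simp [hgm], ?_⟩
      intro i hi
      cases i with
      | zero => simpa [hg0] using hat
      | succ p => simpa using hgarc p (by omega)

lemma kreach_project (hcomp : IsComposition AT AQ π) {k : ℕ} {x y : W}
    (h : KReach AQ k x y) : KReach AT k (π x) (π y) := by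
  obtain ⟨n, hn, f, h0, hn', harc⟩ := h
  obtain ⟨m, hm, g, hg0, hgm, hgarc⟩ := walk_project hcomp n x y f h0 hn' harc
  exact ⟨m, hm.trans hn, g, hg0, hgm, hgarc⟩

lemma strong_project (hcomp : IsComposition AT AQ π) (h : Strong AQ) : Strong AT := by
  intro i j
  obtain ⟨x, hx⟩ := hcomp.surj i
  obtain ⟨y, hy⟩ := hcomp.surj j
  obtain ⟨k, hk⟩ := h x y
  exact ⟨k, hx ▸ hy ▸ kreach_project hcomp hk⟩

lemma walk_lift (hcomp : IsComposition AT AQ π) (hTirr : Irreflexive AT)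
    (rep : ι → W) (hrep : ∀ i, π (rep i) = i)
    {n k : ℕ} (h1 : 1 ≤ n) (hnk : n ≤ k) {x y : W} (g : ℕ → ι)
    (hg0 : g 0 = π x) (hgn : g n = π y) (harc : ∀ i < n, AT (g i) (g (i + 1))) :
    KReach AQ k x y := by
  have hn0 : n ≠ 0 := by omega
  set f : ℕ → W := fun i => if i = 0 then x else if i = n then y else rep (g i) with hf
  have hpf : ∀ i, π (f i) = g i ∨ (i ≠ 0 ∧ i ≠ n) := by
    intro i
    by_cases h0 : i = 0
    · subst h0; left; simp [hf, hg0]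
    · by_cases hn' : i = n
      · subst hn'; left; simp [hf, hn0, hgn]
      · right; exact ⟨h0, hn'⟩
  have hpf' : ∀ i, π (f i) = g i := by
    intro i
    rcases hpf i with h | ⟨h0, hn'⟩
    · exact h
    · simp [hf, h0, hn', hrep]
  refine ⟨n, hnk, f, by simp [hf], by simp [hf, hn0], ?_⟩
  intro i hi
  have hat : AT (g i) (g (i + 1)) := harc i hi
  have hne : π (f i) ≠ π (f (i + 1)) := by
    rw [hpf' i, hpf' (i + 1)]
    intro h
    exact hTirr _ (h ▸ hat)
  rw [hcomp.cross _ _ hne, hpf' i, hpf' (i + 1)]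
  exact hat

end Composition

lemma moon_short_cycle {ι : Type*} [Fintype ι] {AT : ι → ι → Prop}
    (hTirr : Irreflexive AT) (hsemi : Semicomplete AT) (hstrong : Strong AT)
    (hcard : 2 ≤ Fintype.card ι) (i : ι) :
    ∃ a, AT i a ∧ (AT a i ∨ ∃ b, AT a b ∧ AT b i) := by
  by_contra hcon
  have h2 : ∀ a, AT i a → ¬ AT a i := fun a ha hai => hcon ⟨a, ha, Or.inl hai⟩
  have h3 : ∀ a b, AT i a → AT a b → ¬ AT b i :=
    fun a b ha hab hbi => hcon ⟨a, ha, Or.inr ⟨b, hab, hbi⟩⟩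
  have key : ∀ c, AT i c → ∀ d, AT c d → AT i d := by
    intro c hic d hcd
    have hdi : d ≠ i := by rintro rfl; exact h2 c hic hcd
    have hndi : ¬ AT d i := h3 c d hic hcd
    rcases hsemi i d (Ne.symm hdi) with h | h
    · exact h
    · exact absurd h hndi
  obtain ⟨j, hj⟩ := Fintype.exists_ne_of_one_lt_card (by omega) i
  obtain ⟨k, n, hn, f, h0, hfn, harc⟩ := hstrong i j
  have hn1 : 1 ≤ n := by
    rcases Nat.eq_zero_or_pos n with h | h
    · subst h; exact absurd (h0.symm.trans hfn) (fun hh => hj hh.symm)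
    · exact h
  have hia0 : AT i (f 1) := by
    have := harc 0 (by omega)
    rwa [h0] at this
  have stay : ∀ (m : ℕ) (f' : ℕ → ι), f' 0 = f 1 →
      (∀ i' < m, AT (f' i') (f' (i' + 1))) → AT i (f' m) := by
    intro m
    induction m with
    | zero => intro f' h0' _; rw [h0']; exact hia0
    | succ m ih =>
      intro f' h0' harc'
      exact key _ (ih f' h0' (fun i' hi' => harc' i' (by omega))) _ (harc' m (by omega))
  obtain ⟨k', n', hn', f', h0', hfn', harc'⟩ := hstrong (f 1) i
  have := stay n' f' h0' harc'
  rw [hfn'] at this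
  exact hTirr i this

/-- In a strong semicomplete composition, for every non-king `u` there is a 3-king
`v` with `d(u, v) > 3` which dominates `u`. -/
theorem stmt11 {ι W : Type*} [Fintype ι] [Fintype W]
    (AT : ι → ι → Prop) (AQ : W → W → Prop) (π : W → ι)
    (hcard : 2 ≤ Fintype.card ι)
    (hTirr : Irreflexive AT) (hQirr : Irreflexive AQ)
    (hsemi : Semicomplete AT) (hcomp : IsComposition AT AQ π)
    (hstrong : Strong AQ) :
    ∀ u : W, ¬ IsKKing AQ 3 u →
      ∃ v : W, IsKKing AQ 3 v ∧ ¬ KReach AQ 3 u v ∧ AQ v u := by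
    classical
  intro u hu
  -- a section of π
  have hrep' : ∀ i : ι, ∃ w : W, π w = i := hcomp.surj
  choose rep hrep using hrep'
  have hTstrong : Strong AT := strong_project hcomp hstrong
  -- every vertex in the same fiber as x is 3-reachable from x (via a short cycle in T)
  have hclose : ∀ x z : W, π z = π x → KReach AQ 3 x z := by
    intro x z hzx
    obtain ⟨a, hia, hrest⟩ := moon_short_cycle hTirr hsemi hTstrong hcard (π x)
    rcases hrest with hai | ⟨b, hab, hbi⟩
    · refine walk_lift hcomp hTirr rep hrep (n := 2) (k := 3) (by omega) (by omega)
        (fun m => if m = 1 then a else π x) (by simp) (by simp [hzx]) ?_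
      intro m hm
      interval_cases m <;> simpa using (by first | exact hia | exact hai)
    · refine walk_lift hcomp hTirr rep hrep (n := 3) (k := 3) (by omega) (le_refl 3)
        (fun m => if m = 1 then a else if m = 2 then b else π x) (by simp) (by simp [hzx]) ?_
      intro m hm
      interval_cases m <;> simpa using (by first | exact hia | exact hab | exact hbi)
  -- the set of fiber indices not 3-reachable from π u in T
  let S : Finset ι := Finset.univ.filter (fun j => ¬ KReach AT 3 (π u) j)
  have hSmem : ∀ j, j ∈ S ↔ ¬ KReach AT 3 (π u) j := by
    intro j; simp [S]
  -- a witness that u is not a 3-king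
  have hu' : ∃ y : W, ¬ KReach AQ 3 u y := by
    by_contra h
    push_neg at h
    exact hu h
  obtain ⟨y0, hy0⟩ := hu'
  have hy0S : π y0 ∈ S := by
    rw [hSmem]
    intro hT
    apply hy0
    by_cases h : π y0 = π u
    · exact hclose u y0 h
    · obtain ⟨n, hn3, g, hg0, hgn, harc⟩ := hT
      have hn1 : 1 ≤ n := by
        rcases Nat.eq_zero_or_pos n with h' | h'
        · exact absurd (by rw [← hgn, h', hg0]) h
        · exact h'
      exact walk_lift hcomp hTirr rep hrep hn1 hn3 g hg0 hgn harc
  have hi0S : π u ∉ S := by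
    rw [hSmem]
    intro h
    exact h (kreach_refl 3 (π u))
  -- choose j ∈ S of maximum out-degree within S
  obtain ⟨j, hjS, hjmax⟩ := Finset.exists_max_image S
    (fun p => (S.filter (fun m => AT p m)).card) ⟨π y0, hy0S⟩
  have hjT : ¬ KReach AT 3 (π u) j := (hSmem j).mp hjS
  -- K2: j dominates everything 2-reachable from π u in T
  have hK2 : ∀ m, KReach AT 2 (π u) m → AT j m := by
    intro m hm
    have hmj : m ≠ j := by
      rintro rfl
      exact hjT (kreach_mono (by omega) hm)
    have hnkj : ¬ AT m j := fun h => hjT (kreach_snoc hm h)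
    rcases hsemi j m (Ne.symm hmj) with h | h
    · exact h
    · exact absurd h hnkj
  have hji0 : AT j (π u) := hK2 (π u) (kreach_refl 2 (π u))
  -- K1: j 2-reaches every other vertex of S
  have hK1 : ∀ m ∈ S, m ≠ j → KReach AT 2 j m := by
    intro m hmS hmj
    by_cases hjm : AT j m
    · exact kreach_arc (by omega) hjm
    by_cases hp : ∃ p ∈ S, AT j p ∧ AT p m
    · obtain ⟨p, hpS, hjp, hpm⟩ := hp
      exact kreach_cons hjp (kreach_arc (le_refl 1) hpm)
    · exfalso
      push_neg at hp
      have hsub : insert j (S.filter (fun q => AT j q)) ⊆ S.filter (fun q => AT m q) := by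
        intro q hq
        rcases Finset.mem_insert.mp hq with rfl | hq'
        · exact Finset.mem_filter.mpr ⟨hjS, (hsemi m q hmj).resolve_right hjm⟩
        · obtain ⟨hqS, hjq⟩ := Finset.mem_filter.mp hq'
          have hqm : q ≠ m := by rintro rfl; exact hjm hjq
          exact Finset.mem_filter.mpr
            ⟨hqS, (hsemi m q (Ne.symm hqm)).resolve_right (hp q hqS hjq)⟩
      have hnotmem : j ∉ S.filter (fun q => AT j q) := by
        simp [Finset.mem_filter, hTirr j]
      have hcard2 := Finset.card_le_card hsub
      rw [Finset.card_insert_of_notMem hnotmem] at hcard2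
      have := hjmax m hmS
      omega
  -- K3: j 2-reaches every vertex outside S
  have hK3 : ∀ m, m ∉ S → KReach AT 2 j m := by
    intro m hmS
    have hm3 : KReach AT 3 (π u) m := by
      by_contra h
      exact hmS ((hSmem m).mpr h)
    have hm3' : KReach AT (2 + 1) (π u) m := hm3
    rcases kreach_succ hm3' with h2 | ⟨z, hz2, hzm⟩
    · exact kreach_arc (by omega) (hK2 m h2)
    · exact kreach_cons (hK2 z hz2) (kreach_arc (le_refl 1) hzm)
  -- j is a 2-king of T
  have hking : ∀ m, m ≠ j → KReach AT 2 j m := by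
    intro m hm
    by_cases hS : m ∈ S
    · exact hK1 m hS hm
    · exact hK3 m hS
  -- the vertex v := rep j
  refine ⟨rep j, ?_, ?_, ?_⟩
  · -- rep j is a 3-king of Q
    intro y
    by_cases hyv : y = rep j
    · subst hyv; exact kreach_refl 3 (rep j)
    by_cases hyj : π y = j
    · exact hclose (rep j) y (by rw [hyj, hrep])
    · have h2 : KReach AT 2 j (π y) := hking (π y) hyj
      obtain ⟨n, hn2, g, hg0, hgn, harc⟩ := h2
      have hn1 : 1 ≤ n := by
        rcases Nat.eq_zero_or_pos n with h' | h'
        · exact absurd (by rw [← hgn, h', hg0]) hyj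
        · exact h'
      exact walk_lift hcomp hTirr rep hrep hn1 (by omega) g (by rw [hg0, hrep]) hgn harc
  · -- u does not 3-reach rep j
    intro h
    have := kreach_project hcomp h
    rw [hrep] at this
    exact hjT this
  · -- rep j dominates u
    have hne : π (rep j) ≠ π u := by
      rw [hrep]
      intro h
      exact hi0S (h ▸ hjS)
    rw [hcomp.cross _ _ hne, hrep]
    exact hji0
end
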